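/- Let T = (L, B) be a finite tree (a finite connected graph with no cycles), let W ⊆ L be a nonempty boundary set, and let x ∈ L. For β ≥ 0 let μ^+_β be the Ising measure on {−1,+1}^L with plus boundary condition on W, i.e. μ^+_β(σ) is proportional to 1{σ(w) = +1 for all w ∈ W}·exp(β ∑_{⟨xy⟩∈B} σ(x)σ(y)), and let {x ↔+ W} be the event that there is a path in T from x to some vertex of W all of whose vertices carry spin +1. Then the plus-percolation probability is nondecreasing in β: for all 0 ≤ β₁ ≤ β₂, μ^+_{β₁}(x ↔+ W) ≤ μ^+_{β₂}(x ↔+ W). -/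

import Mathlib

set_option linter.unusedSectionVars false
set_option linter.unusedVariables false
set_option maxHeartbeats 1000000


open Finset

noncomputable section

open scoped Classical

variable {V : Type*}

/-- The real spin value `±1` of a Boolean spin. -/
def spinVal (b : Bool) : ℝ := if b then 1 else -1

/-- The product `σ(x)σ(y)` of the spins across an unordered pair. -/
def edgeCorr (σ : V → Bool) : Sym2 V → ℝ :=
  Sym2.lift ⟨fun x y => spinVal (σ x) * spinVal (σ y), fun x y => by ring⟩

section Basics

lemma spinVal_true : spinVal true = 1 := rfl
lemma spinVal_false : spinVal false = -1 := rfl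

lemma spinVal_not (b : Bool) : spinVal (!b) = -spinVal b := by cases b <;> simp [spinVal]

lemma spinVal_supermod (a b c d : Bool) :
    spinVal a * spinVal c + spinVal b * spinVal d ≤
      spinVal (a ⊓ b) * spinVal (c ⊓ d) + spinVal (a ⊔ b) * spinVal (c ⊔ d) := by
  cases a <;> cases b <;> cases c <;> cases d <;> norm_num [spinVal]

lemma bool_inf_sup_pair (a b : Bool) :
    (a ⊓ b) = (a && b) ∧ (a ⊔ b) = (a || b) := by
  cases a <;> cases b <;> exact ⟨rfl, rfl⟩

lemma edgeCorr_mk (σ : V → Bool) (a b : V) :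
    edgeCorr σ s(a, b) = spinVal (σ a) * spinVal (σ b) := rfl

lemma edgeCorr_le_one (σ : V → Bool) (f : Sym2 V) : edgeCorr σ f ≤ 1 := by
  induction f using Sym2.ind with
  | _ a b => rw [edgeCorr_mk]; cases σ a <;> cases σ b <;> norm_num [spinVal]

lemma edgeCorr_supermod (σ τ : V → Bool) (f : Sym2 V) :
    edgeCorr σ f + edgeCorr τ f ≤ edgeCorr (σ ⊓ τ) f + edgeCorr (σ ⊔ τ) f := by
  induction f using Sym2.ind with
  | _ a b =>
      simp only [edgeCorr_mk, Pi.inf_apply, Pi.sup_apply]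
      exact spinVal_supermod _ _ _ _

lemma edgeCorr_congr {σ τ : V → Bool} {f : Sym2 V} (h : ∀ z ∈ f, σ z = τ z) :
    edgeCorr σ f = edgeCorr τ f := by
  induction f using Sym2.ind with
  | _ a b =>
      rw [edgeCorr_mk, edgeCorr_mk, h a (by simp), h b (by simp)]

lemma edgeCorr_flip {σ τ : V → Bool} {f : Sym2 V} (h : ∀ z ∈ f, σ z = !τ z) :
    edgeCorr σ f = edgeCorr τ f := by
  induction f using Sym2.ind with
  | _ a b =>
      rw [edgeCorr_mk, edgeCorr_mk, h a (by simp), h b (by simp), spinVal_not, spinVal_not]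
      ring

end Basics

variable [Fintype V] [DecidableEq V]

/-- Unnormalized Ising weight with plus boundary condition on `W`:
`1{σ ≡ +1 on W} · exp(β ∑_{⟨xy⟩∈B} σ(x)σ(y))`. -/
def isingPlusWeight (G : SimpleGraph V) [Fintype G.edgeSet] (β : ℝ) (W : Set V)
    (σ : V → Bool) : ℝ :=
  (if ∀ w ∈ W, σ w = true then 1 else 0) *
    Real.exp (β * ∑ e : G.edgeSet, edgeCorr σ e.val)

/-- The Ising measure `μ^+_β` with plus boundary condition on `W`. -/
def isingPlusMeasure (G : SimpleGraph V) [Fintype G.edgeSet] (β : ℝ) (W : Set V)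
    (σ : V → Bool) : ℝ :=
  isingPlusWeight G β W σ / ∑ σ' : V → Bool, isingPlusWeight G β W σ'

/-- The subgraph of `G` on the plus spins of `σ`. -/
def plusGraph (G : SimpleGraph V) (σ : V → Bool) : SimpleGraph V where
  Adj a b := G.Adj a b ∧ σ a = true ∧ σ b = true
  symm := ⟨fun a b h => ⟨h.1.symm, h.2.2, h.2.1⟩⟩
  loopless := ⟨fun a h => G.loopless.irrefl a h.1⟩

/-- The event `{x ↔+ W}`: there is a path from `x` to `W` all of whose vertices
carry spin `+1`. -/
def PlusConn (G : SimpleGraph V) (σ : V → Bool) (x : V) (W : Set V) : Prop :=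
  σ x = true ∧ ∃ w ∈ W, (plusGraph G σ).Reachable x w

section GraphLemmas

variable {G H : SimpleGraph V} {σ τ : V → Bool}

lemma plusGraph_le (H : SimpleGraph V) (σ : V → Bool) : plusGraph H σ ≤ H :=
  fun _ _ h => h.1

lemma plusGraph_mono_graph (h : H ≤ G) (σ : V → Bool) : plusGraph H σ ≤ plusGraph G σ :=
  fun _ _ hab => ⟨h hab.1, hab.2⟩

lemma bool_true_le {a b : Bool} (ha : a = true) (hab : a ≤ b) : b = true := by
  cases b
  · subst ha; exact absurd hab (by decide)
  · rfl

lemma plusGraph_mono_spin (H : SimpleGraph V) (h : σ ≤ τ) : plusGraph H σ ≤ plusGraph H τ :=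
  fun a b hab => ⟨hab.1, bool_true_le hab.2.1 (h a), bool_true_le hab.2.2 (h b)⟩

lemma plusGraph_all_true (G : SimpleGraph V) : plusGraph G (fun _ => true) = G := by
  ext a b; simp [plusGraph]

lemma spin_true_of_walk {a b : V} (p : (plusGraph H σ).Walk a b) (ha : σ a = true) :
    σ b = true := by
  induction p with
  | nil => exact ha
  | cons h _ ih => exact ih h.2.2

lemma spin_true_of_reachable {a b : V} (h : (plusGraph H σ).Reachable a b)
    (ha : σ a = true) : σ b = true := by
  obtain ⟨p⟩ := h; exact spin_true_of_walk p ha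

/-- Transfer of plus-reachability along spin agreement on a set closed under adjacency. -/
lemma plus_reach_transfer {S : Set V} (hS : ∀ ⦃a b⦄, H.Adj a b → a ∈ S → b ∈ S)
    (hστ : ∀ z ∈ S, σ z = τ z) :
    ∀ {a b : V}, (plusGraph H σ).Walk a b → a ∈ S → (plusGraph H τ).Reachable a b := by
  intro a b p
  induction p with
  | nil => exact fun _ => SimpleGraph.Reachable.refl _
  | @cons c d e h q ih =>
      intro hc
      have hd : d ∈ S := hS h.1 hc
      have hadj : (plusGraph H τ).Adj c d :=
        ⟨h.1, by rw [← hστ c hc]; exact h.2.1, by rw [← hστ d hd]; exact h.2.2⟩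
      exact hadj.reachable.trans (ih hd)

/-- Splitting plus-reachability over a possibly-deleted edge. -/
lemma plus_reach_split (G : SimpleGraph V) (σ : V → Bool) (u v : V) :
    ∀ {a b : V}, (plusGraph G σ).Walk a b →
      ((plusGraph (G.deleteEdges {s(u,v)}) σ).Reachable a b ∨
       (σ u = true ∧ σ v = true ∧
        (plusGraph (G.deleteEdges {s(u,v)}) σ).Reachable a u ∧
        (plusGraph (G.deleteEdges {s(u,v)}) σ).Reachable v b) ∨
       (σ u = true ∧ σ v = true ∧
        (plusGraph (G.deleteEdges {s(u,v)}) σ).Reachable a v ∧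
        (plusGraph (G.deleteEdges {s(u,v)}) σ).Reachable u b)) := by
  intro a b p
  set G' := G.deleteEdges {s(u,v)} with hG'
  induction p with
  | nil => exact Or.inl (SimpleGraph.Reachable.refl _)
  | @cons c d e h q ih =>
      by_cases hcd : s(c, d) = s(u, v)
      · rcases Sym2.eq_iff.mp hcd with ⟨rfl, rfl⟩ | ⟨rfl, rfl⟩
        · -- c = u, d = v
          rcases ih with h1 | ⟨hσu, hσv, h2, h3⟩ | ⟨hσu, hσv, h2, h3⟩
          · exact Or.inr (Or.inl ⟨h.2.1, h.2.2, SimpleGraph.Reachable.refl _, h1⟩)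
          · exact Or.inr (Or.inl ⟨hσu, hσv, SimpleGraph.Reachable.refl _, h3⟩)
          · exact Or.inl h3
        · -- c = v, d = u
          rcases ih with h1 | ⟨hσu, hσv, h2, h3⟩ | ⟨hσu, hσv, h2, h3⟩
          · exact Or.inr (Or.inr ⟨h.2.2, h.2.1, SimpleGraph.Reachable.refl _, h1⟩)
          · exact Or.inl h3
          · exact Or.inr (Or.inr ⟨hσu, hσv, SimpleGraph.Reachable.refl _, h3⟩)
      · have hadj : (plusGraph G' σ).Adj c d :=
          ⟨by rw [hG']; exact (SimpleGraph.deleteEdges_adj).2 ⟨h.1, by simpa using hcd⟩,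
            h.2.1, h.2.2⟩
        rcases ih with h1 | ⟨hσu, hσv, h2, h3⟩ | ⟨hσu, hσv, h2, h3⟩
        · exact Or.inl (hadj.reachable.trans h1)
        · exact Or.inr (Or.inl ⟨hσu, hσv, hadj.reachable.trans h2, h3⟩)
        · exact Or.inr (Or.inr ⟨hσu, hσv, hadj.reachable.trans h2, h3⟩)

/-- Reachability in `G` splits over a possibly-deleted edge. -/
lemma reach_split (G : SimpleGraph V) (u v : V) {a b : V} (h : G.Reachable a b) :
    (G.deleteEdges {s(u,v)}).Reachable a b ∨
      ((G.deleteEdges {s(u,v)}).Reachable a u ∧ (G.deleteEdges {s(u,v)}).Reachable v b) ∨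
      ((G.deleteEdges {s(u,v)}).Reachable a v ∧ (G.deleteEdges {s(u,v)}).Reachable u b) := by
  have h' : (plusGraph G (fun _ => true)).Reachable a b := by
    rw [plusGraph_all_true]; exact h
  obtain ⟨p⟩ := h'
  have := plus_reach_split G (fun _ => true) u v p
  rw [plusGraph_all_true] at this
  tauto

end GraphLemmas
section Core

variable {G : SimpleGraph V} {β : ℝ} {W : Set V} {x u v : V} {σ τ : V → Bool}

/-- The side of the (removed) edge `s(u,v)` containing `x`. -/
def sideU (G : SimpleGraph V) (x u v : V) : Set V :=
  {z | (G.deleteEdges {s(u,v)}).Reachable x z}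

lemma sideU_self : x ∈ sideU G x u v := SimpleGraph.Reachable.refl x

lemma sideU_closed {a b : V} (h : (G.deleteEdges {s(u,v)}).Adj a b)
    (ha : a ∈ sideU G x u v) : b ∈ sideU G x u v :=
  SimpleGraph.Reachable.trans ha h.reachable

lemma sideU_closed_compl {a b : V} (h : (G.deleteEdges {s(u,v)}).Adj a b)
    (ha : a ∉ sideU G x u v) : b ∉ sideU G x u v :=
  fun hb => ha (SimpleGraph.Reachable.trans hb h.symm.reachable)

/-- Sum of edge correlations over edges inside the `x` side. -/
def HU (G : SimpleGraph V) [Fintype G.edgeSet] (x u v : V) (σ : V → Bool) : ℝ :=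
  ∑ f ∈ univ.filter (fun f : G.edgeSet => ∀ z ∈ f.val, z ∈ sideU G x u v),
    edgeCorr σ f.val

/-- Sum of edge correlations over edges inside the other side. -/
def HV (G : SimpleGraph V) [Fintype G.edgeSet] (x u v : V) (σ : V → Bool) : ℝ :=
  ∑ f ∈ univ.filter (fun f : G.edgeSet => ∀ z ∈ f.val, z ∉ sideU G x u v),
    edgeCorr σ f.val

/-- Indicator of `σ = +1` on `W ∩ P`. -/
def IndP (W : Set V) (P : V → Prop) (σ : V → Bool) : ℝ :=
  if ∀ w ∈ W, P w → σ w = true then 1 else 0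

/-- Indicator of `σ = -1` on `W ∩ P`. -/
def IndM (W : Set V) (P : V → Prop) (σ : V → Bool) : ℝ :=
  if ∀ w ∈ W, P w → σ w = false then 1 else 0

lemma IndP_nonneg : 0 ≤ IndP W P σ := by unfold IndP; positivity
lemma IndM_nonneg : 0 ≤ IndM W P σ := by unfold IndM; positivity

lemma IndP_congr {P : V → Prop} (h : ∀ z, P z → σ z = τ z) : IndP W P σ = IndP W P τ := by
  unfold IndP
  refine if_congr ?_ rfl rfl
  constructor <;> intro hh w hw hP
  · rw [← h w hP]; exact hh w hw hP
  · rw [h w hP]; exact hh w hw hP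

lemma IndP_flip {P : V → Prop} (h : ∀ z, P z → σ z = !τ z) : IndP W P σ = IndM W P τ := by
  unfold IndP IndM
  refine if_congr ?_ rfl rfl
  constructor <;> intro hh w hw hP
  · have := hh w hw hP; rw [h w hP] at this; simpa using this
  · rw [h w hP, hh w hw hP]; rfl

lemma IndP_supermod {P : V → Prop} :
    IndP W P σ * IndP W P τ ≤ IndP W P (σ ⊓ τ) * IndP W P (σ ⊔ τ) := by
  unfold IndP
  by_cases h1 : ∀ w ∈ W, P w → σ w = true
  · by_cases h2 : ∀ w ∈ W, P w → τ w = true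
    · have h3 : ∀ w ∈ W, P w → (σ ⊓ τ) w = true := fun w hw hP => by
        have := h1 w hw hP; have := h2 w hw hP
        simp [Pi.inf_apply, *]
      have h4 : ∀ w ∈ W, P w → (σ ⊔ τ) w = true := fun w hw hP => by
        have := h1 w hw hP
        simp [Pi.sup_apply, *]
      rw [if_pos h1, if_pos h2, if_pos h3, if_pos h4]
    · simp only [h1, h2, if_true, if_false, mul_zero, mul_one]
      positivity
  · simp only [h1, if_false, zero_mul]
    positivity

lemma IndM_cross_supermod {P : V → Prop} :
    IndM W P σ * IndP W P τ ≤ IndM W P (σ ⊓ τ) * IndP W P (σ ⊔ τ) := by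
  unfold IndP IndM
  by_cases h1 : ∀ w ∈ W, P w → σ w = false
  · by_cases h2 : ∀ w ∈ W, P w → τ w = true
    · have h3 : ∀ w ∈ W, P w → (σ ⊓ τ) w = false := fun w hw hP => by
        have := h1 w hw hP
        cases hτ : τ w <;> simp [Pi.inf_apply, *]
      have h4 : ∀ w ∈ W, P w → (σ ⊔ τ) w = true := fun w hw hP => by
        have := h2 w hw hP
        cases hσ : σ w <;> simp [Pi.sup_apply, *]
      rw [if_pos h1, if_pos h2, if_pos h3, if_pos h4]
    · simp only [h1, h2, if_true, if_false, mul_zero, mul_one]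
      positivity
  · simp only [h1, if_false, zero_mul]
    positivity

lemma HU_congr [Fintype G.edgeSet] (h : ∀ z ∈ sideU G x u v, σ z = τ z) :
    HU G x u v σ = HU G x u v τ := by
  unfold HU
  refine Finset.sum_congr rfl fun f hf => edgeCorr_congr fun z hz => ?_
  exact h z ((Finset.mem_filter.1 hf).2 z hz)

lemma HV_congr [Fintype G.edgeSet] (h : ∀ z, z ∉ sideU G x u v → σ z = τ z) :
    HV G x u v σ = HV G x u v τ := by
  unfold HV
  refine Finset.sum_congr rfl fun f hf => edgeCorr_congr fun z hz => ?_
  exact h z ((Finset.mem_filter.1 hf).2 z hz)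

lemma HV_flip [Fintype G.edgeSet] (h : ∀ z, z ∉ sideU G x u v → σ z = !τ z) :
    HV G x u v σ = HV G x u v τ := by
  unfold HV
  refine Finset.sum_congr rfl fun f hf => edgeCorr_flip fun z hz => ?_
  exact h z ((Finset.mem_filter.1 hf).2 z hz)

lemma HU_supermod [Fintype G.edgeSet] :
    HU G x u v σ + HU G x u v τ ≤ HU G x u v (σ ⊓ τ) + HU G x u v (σ ⊔ τ) := by
  unfold HU
  rw [← Finset.sum_add_distrib, ← Finset.sum_add_distrib]
  exact Finset.sum_le_sum fun f _ => edgeCorr_supermod σ τ f.val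

lemma HV_supermod [Fintype G.edgeSet] :
    HV G x u v σ + HV G x u v τ ≤ HV G x u v (σ ⊓ τ) + HV G x u v (σ ⊔ τ) := by
  unfold HV
  rw [← Finset.sum_add_distrib, ← Finset.sum_add_distrib]
  exact Finset.sum_le_sum fun f _ => edgeCorr_supermod σ τ f.val

lemma mul_exp_le {i i' a a' : ℝ} (hi : 0 ≤ i) (h1 : i ≤ i') (h2 : a ≤ a') :
    i * Real.exp a ≤ i' * Real.exp a' :=
  mul_le_mul h1 (Real.exp_le_exp.2 h2) (Real.exp_pos a).le (le_trans hi h1)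

/-- The `U`-side weight. -/
def wUf (G : SimpleGraph V) [Fintype G.edgeSet] (β : ℝ) (W : Set V) (x u v : V)
    (σ : V → Bool) : ℝ :=
  IndP W (· ∈ sideU G x u v) σ * Real.exp (β * HU G x u v σ)

/-- The `V`-side weight. -/
def wVf (G : SimpleGraph V) [Fintype G.edgeSet] (β : ℝ) (W : Set V) (x u v : V)
    (σ : V → Bool) : ℝ :=
  IndP W (· ∉ sideU G x u v) σ * Real.exp (β * HV G x u v σ)

lemma wUf_nonneg [Fintype G.edgeSet] : 0 ≤ wUf G β W x u v σ :=
  mul_nonneg IndP_nonneg (Real.exp_pos _).le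

lemma wVf_nonneg [Fintype G.edgeSet] : 0 ≤ wVf G β W x u v σ :=
  mul_nonneg IndP_nonneg (Real.exp_pos _).le

lemma wUf_supermod [Fintype G.edgeSet] (hβ : 0 ≤ β) :
    wUf G β W x u v σ * wUf G β W x u v τ ≤
      wUf G β W x u v (σ ⊓ τ) * wUf G β W x u v (σ ⊔ τ) := by
  unfold wUf
  have e1 : ∀ ρ₁ ρ₂ : V → Bool,
      (IndP W (· ∈ sideU G x u v) ρ₁ * Real.exp (β * HU G x u v ρ₁)) *
      (IndP W (· ∈ sideU G x u v) ρ₂ * Real.exp (β * HU G x u v ρ₂))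
      = (IndP W (· ∈ sideU G x u v) ρ₁ * IndP W (· ∈ sideU G x u v) ρ₂) *
        Real.exp (β * (HU G x u v ρ₁ + HU G x u v ρ₂)) := by
    intro ρ₁ ρ₂; rw [mul_add, Real.exp_add]; ring
  rw [e1, e1]
  exact mul_exp_le (mul_nonneg IndP_nonneg IndP_nonneg) IndP_supermod
    (mul_le_mul_of_nonneg_left HU_supermod hβ)

end Core
section Core2

variable {G : SimpleGraph V} {β : ℝ} {W : Set V} {x u v : V} {σ τ : V → Bool}

lemma not_forall_mem_not (f : Sym2 V) (P : V → Prop) (h1 : ∀ z ∈ f, P z) :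
    ¬ (∀ z ∈ f, ¬ P z) := by
  induction f using Sym2.ind with
  | _ a b => exact fun h2 => h2 a (by simp) (h1 a (by simp))

lemma edge_trichotomy (huv : G.Adj u v) (hxv : v ∉ sideU G x u v) :
    ∀ f ∈ G.edgeSet, f = s(u,v) ∨ (∀ z ∈ f, z ∈ sideU G x u v) ∨
      (∀ z ∈ f, z ∉ sideU G x u v) := by
  intro f
  induction f using Sym2.ind with
  | _ a b =>
    intro hf
    have hab : G.Adj a b := G.mem_edgeSet.1 hf
    by_cases he : s(a,b) = s(u,v)
    · exact Or.inl he
    · have hadj : (G.deleteEdges {s(u,v)}).Adj a b :=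
        (SimpleGraph.deleteEdges_adj).2 ⟨hab, by simpa using he⟩
      by_cases ha : a ∈ sideU G x u v
      · refine Or.inr (Or.inl fun z hz => ?_)
        rcases Sym2.mem_iff.1 hz with rfl | rfl
        · exact ha
        · exact sideU_closed hadj ha
      · refine Or.inr (Or.inr fun z hz => ?_)
        rcases Sym2.mem_iff.1 hz with rfl | rfl
        · exact ha
        · exact sideU_closed_compl hadj ha

lemma edge_sum_split [Fintype G.edgeSet] (huv : G.Adj u v) (hxu : u ∈ sideU G x u v)
    (hxv : v ∉ sideU G x u v) (σ : V → Bool) :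
    ∑ f : G.edgeSet, edgeCorr σ f.val
      = HU G x u v σ + HV G x u v σ + edgeCorr σ s(u,v) := by
  classical
  set PU : G.edgeSet → Prop := fun f => ∀ z ∈ f.val, z ∈ sideU G x u v with hPU
  set PV : G.edgeSet → Prop := fun f => ∀ z ∈ f.val, z ∉ sideU G x u v with hPV
  have key : (univ.filter (fun f : G.edgeSet => ¬ PU f)).filter (fun f => ¬ PV f)
      = {⟨s(u,v), G.mem_edgeSet.2 huv⟩} := by
    ext g
    simp only [Finset.mem_filter, Finset.mem_univ, true_and, Finset.mem_singleton]
    constructor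
    · rintro ⟨hg1, hg2⟩
      rcases edge_trichotomy huv hxv g.val g.property with h | h | h
      · exact Subtype.ext h
      · exact absurd h hg1
      · exact absurd h hg2
    · rintro rfl
      constructor
      · intro h; exact hxv (h v (by simp))
      · intro h; exact (h u (by simp)) hxu
  have h1 := Finset.sum_filter_add_sum_filter_not (univ : Finset G.edgeSet) PU
    (fun f => edgeCorr σ f.val)
  have h2 := Finset.sum_filter_add_sum_filter_not
    (univ.filter (fun f : G.edgeSet => ¬ PU f)) PV (fun f => edgeCorr σ f.val)
  have h3 : (univ.filter (fun f : G.edgeSet => ¬ PU f)).filter PV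
      = univ.filter PV := by
    ext g
    simp only [Finset.mem_filter, Finset.mem_univ, true_and, and_iff_right_iff_imp]
    intro hg hPUg
    exact absurd hg (not_forall_mem_not g.val _ hPUg)
  rw [key] at h2
  rw [h3] at h2
  rw [Finset.sum_singleton] at h2
  unfold HU HV
  rw [← h1, ← h2]
  ring

end Core2
section Core3

variable {G : SimpleGraph V} {β : ℝ} {W : Set V} {x u v : V} {σ τ : V → Bool}

lemma weight_factor [Fintype G.edgeSet] (huv : G.Adj u v) (hxu : u ∈ sideU G x u v)
    (hxv : v ∉ sideU G x u v) (σ : V → Bool) :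
    isingPlusWeight G β W σ
      = wUf G β W x u v σ * wVf G β W x u v σ * Real.exp (β * edgeCorr σ s(u,v)) := by
  unfold isingPlusWeight wUf wVf
  have hind : (if ∀ w ∈ W, σ w = true then (1:ℝ) else 0)
      = IndP W (· ∈ sideU G x u v) σ * IndP W (· ∉ sideU G x u v) σ := by
    unfold IndP
    by_cases h1 : ∀ w ∈ W, w ∈ sideU G x u v → σ w = true
    · by_cases h2 : ∀ w ∈ W, w ∉ sideU G x u v → σ w = true
      · rw [if_pos h1, if_pos h2, if_pos]
        · ring
        · intro w hw
          by_cases hm : w ∈ sideU G x u v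
          · exact h1 w hw hm
          · exact h2 w hw hm
      · rw [if_pos h1, if_neg h2, if_neg]
        · ring
        · intro hall; exact h2 fun w hw _ => hall w hw
    · rw [if_neg h1, if_neg]
      · ring
      · intro hall; exact h1 fun w hw _ => hall w hw
  rw [hind, edge_sum_split huv hxu hxv σ]
  rw [mul_add, mul_add, Real.exp_add, Real.exp_add]
  ring

/-- `x` is plus-connected to `W` within its own side. -/
def aP (G : SimpleGraph V) (W : Set V) (x u v : V) (σ : V → Bool) : Prop :=
  σ x = true ∧ ∃ w ∈ W, w ∈ sideU G x u v ∧
    (plusGraph (G.deleteEdges {s(u,v)}) σ).Reachable x w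

/-- `x` is plus-connected to `u` within its own side, but not to `W` there. -/
def bP (G : SimpleGraph V) (W : Set V) (x u v : V) (σ : V → Bool) : Prop :=
  σ x = true ∧ (plusGraph (G.deleteEdges {s(u,v)}) σ).Reachable x u ∧ ¬ aP G W x u v σ

/-- `v` is plus-connected to `W` within the other side. -/
def cP (G : SimpleGraph V) (W : Set V) (x u v : V) (σ : V → Bool) : Prop :=
  σ v = true ∧ ∃ w ∈ W, w ∉ sideU G x u v ∧
    (plusGraph (G.deleteEdges {s(u,v)}) σ).Reachable v w

lemma aP_congr (h : ∀ z ∈ sideU G x u v, σ z = τ z) (ha : aP G W x u v σ) :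
    aP G W x u v τ := by
  obtain ⟨hx, w, hw, hwU, hr⟩ := ha
  obtain ⟨p⟩ := hr
  refine ⟨by rw [← h x sideU_self]; exact hx, w, hw, hwU, ?_⟩
  exact plus_reach_transfer (fun a b hab ha => sideU_closed hab ha) h p sideU_self

lemma bP_reach_congr (h : ∀ z ∈ sideU G x u v, σ z = τ z)
    (hr : (plusGraph (G.deleteEdges {s(u,v)}) σ).Reachable x u) :
    (plusGraph (G.deleteEdges {s(u,v)}) τ).Reachable x u := by
  obtain ⟨p⟩ := hr
  exact plus_reach_transfer (fun a b hab ha => sideU_closed hab ha) h p sideU_self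

lemma bP_congr (h : ∀ z ∈ sideU G x u v, σ z = τ z) (hb : bP G W x u v σ) :
    bP G W x u v τ := by
  obtain ⟨hx, hr, hna⟩ := hb
  refine ⟨by rw [← h x sideU_self]; exact hx, bP_reach_congr h hr, fun ha => ?_⟩
  exact hna (aP_congr (fun z hz => (h z hz).symm) ha)

lemma cP_congr (hxv : v ∉ sideU G x u v) (h : ∀ z, z ∉ sideU G x u v → σ z = τ z)
    (hc : cP G W x u v σ) : cP G W x u v τ := by
  obtain ⟨hv, w, hw, hwU, hr⟩ := hc
  obtain ⟨p⟩ := hr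
  refine ⟨by rw [← h v hxv]; exact hv, w, hw, hwU, ?_⟩
  exact plus_reach_transfer (S := {z | z ∉ sideU G x u v})
    (fun a b hab ha => sideU_closed_compl hab ha) h p hxv

lemma aP_mono (hστ : σ ≤ τ) (ha : aP G W x u v σ) : aP G W x u v τ := by
  obtain ⟨hx, w, hw, hwU, hr⟩ := ha
  exact ⟨bool_true_le hx (hστ x), w, hw, hwU,
    hr.mono (plusGraph_mono_spin _ hστ)⟩

lemma plusConn_decomp (huv : G.Adj u v) (hxu : u ∈ sideU G x u v)
    (hxv : v ∉ sideU G x u v) (σ : V → Bool) :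
    PlusConn G σ x W ↔ aP G W x u v σ ∨ (bP G W x u v σ ∧ cP G W x u v σ) := by
  constructor
  · rintro ⟨hx, w, hw, hr⟩
    obtain ⟨p⟩ := hr
    rcases plus_reach_split G σ u v p with h1 | ⟨hσu, hσv, h2, h3⟩ | ⟨hσu, hσv, h2, h3⟩
    · exact Or.inl ⟨hx, w, hw, h1.mono (plusGraph_le _ _), h1⟩
    · have hwnU : w ∉ sideU G x u v := by
        intro hwU
        exact hxv (SimpleGraph.Reachable.trans hwU (h3.mono (plusGraph_le _ _)).symm)
      by_cases haP : aP G W x u v σ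
      · exact Or.inl haP
      · exact Or.inr ⟨⟨hx, h2, haP⟩, ⟨hσv, w, hw, hwnU, h3⟩⟩
    · exact absurd (h2.mono (plusGraph_le _ _)) hxv
  · rintro (⟨hx, w, hw, _, hr⟩ | ⟨⟨hx, hru, _⟩, ⟨hσv, w, hw, _, hrv⟩⟩)
    · exact ⟨hx, w, hw, hr.mono (plusGraph_mono_graph (G.deleteEdges_le _) σ)⟩
    · have hσu : σ u = true := spin_true_of_reachable hru hx
      have hadj : (plusGraph G σ).Adj u v := ⟨huv, hσu, hσv⟩
      have pg := plusGraph_mono_graph (G.deleteEdges_le {s(u,v)}) σ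
      exact ⟨hx, w, hw, ((hru.mono pg).trans hadj.reachable).trans (hrv.mono pg)⟩

lemma indicator_decomp (huv : G.Adj u v) (hxu : u ∈ sideU G x u v)
    (hxv : v ∉ sideU G x u v) (σ : V → Bool) :
    (if PlusConn G σ x W then (1:ℝ) else 0)
      = (if aP G W x u v σ then (1:ℝ) else 0)
        + (if bP G W x u v σ then (1:ℝ) else 0) * (if cP G W x u v σ then (1:ℝ) else 0) := by
  by_cases ha : aP G W x u v σ
  · have hb : ¬ bP G W x u v σ := fun hb => hb.2.2 ha
    rw [if_pos ha, if_pos ((plusConn_decomp huv hxu hxv σ).2 (Or.inl ha)), if_neg hb]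
    ring
  · by_cases hb : bP G W x u v σ
    · by_cases hc : cP G W x u v σ
      · rw [if_neg ha, if_pos hb, if_pos hc,
          if_pos ((plusConn_decomp huv hxu hxv σ).2 (Or.inr ⟨hb, hc⟩))]
        ring
      · rw [if_neg ha, if_pos hb, if_neg hc, if_neg]
        · ring
        · intro hP
          rcases (plusConn_decomp huv hxu hxv σ).1 hP with h | h
          · exact ha h
          · exact hc h.2
    · rw [if_neg ha, if_neg hb, if_neg]
      · ring
      · intro hP
        rcases (plusConn_decomp huv hxu hxv σ).1 hP with h | h
        · exact ha h
        · exact hb h.1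

lemma bc_spin (hb : bP G W x u v σ) (hc : cP G W x u v σ) :
    edgeCorr σ s(u,v) = 1 := by
  have hσu : σ u = true := spin_true_of_reachable hb.2.1 hb.1
  rw [edgeCorr_mk, hσu, hc.1, spinVal_true]
  norm_num

end Core3
section Core4

variable {G : SimpleGraph V} {β : ℝ} {W : Set V} {x u v : V}

/-- Merge of two half-configurations. -/
def mgc (G : SimpleGraph V) (x u v : V)
    (α : {z : V // z ∈ sideU G x u v} → Bool) (γ : {z : V // z ∉ sideU G x u v} → Bool) :
    V → Bool :=
  fun z => if h : z ∈ sideU G x u v then α ⟨z, h⟩ else γ ⟨z, h⟩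

lemma mgc_mem {α γ} {z : V} (h : z ∈ sideU G x u v) : mgc G x u v α γ z = α ⟨z, h⟩ :=
  dif_pos h

lemma mgc_not_mem {α γ} {z : V} (h : z ∉ sideU G x u v) : mgc G x u v α γ z = γ ⟨z, h⟩ :=
  dif_neg h

lemma sum_mgc (F : (V → Bool) → ℝ) :
    ∑ σ : V → Bool, F σ = ∑ α, ∑ γ, F (mgc G x u v α γ) := by
  classical
  rw [← Equiv.sum_comp (Equiv.piEquivPiSubtypeProd
      (fun z => z ∈ sideU G x u v) (fun _ => Bool)).symm F,
    Fintype.sum_prod_type]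
  rfl

lemma mgc_inf {α α' γ γ'} :
    mgc G x u v α γ ⊓ mgc G x u v α' γ' = mgc G x u v (α ⊓ α') (γ ⊓ γ') := by
  funext z
  by_cases h : z ∈ sideU G x u v <;> simp [mgc, h]

lemma mgc_sup {α α' γ γ'} :
    mgc G x u v α γ ⊔ mgc G x u v α' γ' = mgc G x u v (α ⊔ α') (γ ⊔ γ') := by
  funext z
  by_cases h : z ∈ sideU G x u v <;> simp [mgc, h]

lemma bool_inf_eq (a b : Bool) : (a ⊓ b) = (a && b) := by cases a <;> cases b <;> rfl
lemma bool_sup_eq (a b : Bool) : (a ⊔ b) = (a || b) := by cases a <;> cases b <;> rfl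

lemma mgc_inf_fixR {α α' γ} :
    mgc G x u v (α ⊓ α') γ = mgc G x u v α γ ⊓ mgc G x u v α' γ := by
  funext z
  by_cases h : z ∈ sideU G x u v <;>
    simp [mgc, h, Pi.inf_apply, bool_inf_eq]

lemma mgc_sup_fixR {α α' γ} :
    mgc G x u v (α ⊔ α') γ = mgc G x u v α γ ⊔ mgc G x u v α' γ := by
  funext z
  by_cases h : z ∈ sideU G x u v <;>
    simp [mgc, h, Pi.sup_apply, bool_sup_eq]

lemma mgc_inf_fixL {α γ γ'} :
    mgc G x u v α (γ ⊓ γ') = mgc G x u v α γ ⊓ mgc G x u v α γ' := by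
  funext z
  by_cases h : z ∈ sideU G x u v <;>
    simp [mgc, h, Pi.inf_apply, bool_inf_eq]

lemma mgc_sup_fixL {α γ γ'} :
    mgc G x u v α (γ ⊔ γ') = mgc G x u v α γ ⊔ mgc G x u v α γ' := by
  funext z
  by_cases h : z ∈ sideU G x u v <;>
    simp [mgc, h, Pi.sup_apply, bool_sup_eq]

lemma mgc_mono_left {α α' γ} (h : α ≤ α') : mgc G x u v α γ ≤ mgc G x u v α' γ := by
  intro z
  by_cases hz : z ∈ sideU G x u v
  · rw [mgc_mem hz, mgc_mem hz]; exact h _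
  · rw [mgc_not_mem hz, mgc_not_mem hz]

end Core4
section Core5

variable {G : SimpleGraph V} {β : ℝ} {W : Set V} {x u v : V}

/-- all-plus configuration on the `U`-side. -/
def alT (G : SimpleGraph V) (x u v : V) : {z : V // z ∈ sideU G x u v} → Bool := fun _ => true

/-- The spin at `v` of a half-configuration. -/
def tB (hv : v ∉ sideU G x u v) (γ : {z : V // z ∉ sideU G x u v} → Bool) : Bool :=
  γ ⟨v, hv⟩

/-- `V`-side weight as a function of the half-configuration. -/
def wVm (G : SimpleGraph V) [Fintype G.edgeSet] (β : ℝ) (W : Set V) (x u v : V)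
    (γ : {z : V // z ∉ sideU G x u v} → Bool) : ℝ :=
  wVf G β W x u v (mgc G x u v (alT G x u v) γ)

/-- `V`-side weight with minus boundary condition. -/
def wVtm (G : SimpleGraph V) [Fintype G.edgeSet] (β : ℝ) (W : Set V) (x u v : V)
    (γ : {z : V // z ∉ sideU G x u v} → Bool) : ℝ :=
  IndM W (· ∉ sideU G x u v) (mgc G x u v (alT G x u v) γ) *
    Real.exp (β * HV G x u v (mgc G x u v (alT G x u v) γ))

variable [Fintype G.edgeSet]

/-- plus-boundary `V`-side measure tilted by a plus spin at `u`. -/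
def nuP (β : ℝ) (W : Set V) (hv : v ∉ sideU G x u v)
    (γ : {z : V // z ∉ sideU G x u v} → Bool) : ℝ :=
  wVm G β W x u v γ * Real.exp (β * spinVal (tB hv γ))

/-- minus-boundary `V`-side measure tilted by a plus spin at `u`. -/
def nuM (β : ℝ) (W : Set V) (hv : v ∉ sideU G x u v)
    (γ : {z : V // z ∉ sideU G x u v} → Bool) : ℝ :=
  wVtm G β W x u v γ * Real.exp (β * spinVal (tB hv γ))

def ZB (β : ℝ) (W : Set V) (hv : v ∉ sideU G x u v) (b : Bool) : ℝ :=
  ∑ γ, wVm G β W x u v γ * Real.exp (β * (spinVal b * spinVal (tB hv γ)))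

def YB (β : ℝ) (W : Set V) (hv : v ∉ sideU G x u v) (b : Bool) : ℝ :=
  ∑ γ, wVm G β W x u v γ * Real.exp (β * (spinVal b * spinVal (tB hv γ)))
    * spinVal (tB hv γ)

def phiB (β : ℝ) (W : Set V) (hv : v ∉ sideU G x u v) (b : Bool) : ℝ :=
  spinVal b * YB β W hv b / ZB β W hv b

def chiB (hv : v ∉ sideU G x u v) (γ : {z : V // z ∉ sideU G x u v} → Bool) : ℝ :=
  if tB hv γ then 1 else 0

lemma wVm_nonneg {γ} : 0 ≤ wVm G β W x u v γ := wVf_nonneg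
lemma wVtm_nonneg {γ} : 0 ≤ wVtm G β W x u v γ :=
  mul_nonneg IndM_nonneg (Real.exp_pos _).le
lemma nuP_nonneg {hv : v ∉ sideU G x u v} {γ} : 0 ≤ nuP β W hv γ :=
  mul_nonneg wVm_nonneg (Real.exp_pos _).le
lemma nuM_nonneg {hv : v ∉ sideU G x u v} {γ} : 0 ≤ nuM β W hv γ :=
  mul_nonneg wVtm_nonneg (Real.exp_pos _).le
lemma chiB_nonneg {hv : v ∉ sideU G x u v} {γ} : 0 ≤ chiB hv γ := by
  unfold chiB; positivity

/-- flip equivalence on half-configurations. -/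
def flipE (G : SimpleGraph V) (x u v : V) :
    ({z : V // z ∉ sideU G x u v} → Bool) ≃ ({z : V // z ∉ sideU G x u v} → Bool) where
  toFun γ := fun z => !γ z
  invFun γ := fun z => !γ z
  left_inv γ := by funext z; simp
  right_inv γ := by funext z; simp

lemma mgc_flip {γ} : ∀ z, z ∉ sideU G x u v →
    mgc G x u v (alT G x u v) (flipE G x u v γ) z = !(mgc G x u v (alT G x u v) γ z) := by
  intro z hz
  rw [mgc_not_mem hz, mgc_not_mem hz]
  rfl

lemma wVm_flip {γ} : wVm G β W x u v (flipE G x u v γ) = wVtm G β W x u v γ := by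
  unfold wVm wVtm wVf
  rw [IndP_flip (fun z hz => mgc_flip z hz), HV_flip (fun z hz => mgc_flip z hz)]

lemma tB_flip {hv : v ∉ sideU G x u v} {γ} : tB hv (flipE G x u v γ) = !(tB hv γ) := rfl

lemma ZB_true {hv : v ∉ sideU G x u v} : ZB (G := G) β W hv true = ∑ γ, nuP β W hv γ := by
  unfold ZB nuP
  exact Finset.sum_congr rfl fun γ _ => by rw [spinVal_true, one_mul]

lemma YB_true {hv : v ∉ sideU G x u v} : YB (G := G) β W hv true = ∑ γ, nuP β W hv γ * spinVal (tB hv γ) := by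
  unfold YB nuP
  exact Finset.sum_congr rfl fun γ _ => by rw [spinVal_true, one_mul]

lemma ZB_false {hv : v ∉ sideU G x u v} : ZB (G := G) β W hv false = ∑ γ, nuM β W hv γ := by
  unfold ZB nuM
  rw [← Equiv.sum_comp (flipE G x u v)
    (fun γ => wVm G β W x u v γ * Real.exp (β * (spinVal false * spinVal (tB hv γ))))]
  refine Finset.sum_congr rfl fun γ _ => ?_
  rw [wVm_flip, tB_flip, spinVal_not, spinVal_false]
  ring_nf

lemma YB_false {hv : v ∉ sideU G x u v} :
    YB (G := G) β W hv false = - ∑ γ, nuM β W hv γ * spinVal (tB hv γ) := by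
  unfold YB nuM
  rw [← Equiv.sum_comp (flipE G x u v)
    (fun γ => wVm G β W x u v γ * Real.exp (β * (spinVal false * spinVal (tB hv γ)))
      * spinVal (tB hv γ)), ← Finset.sum_neg_distrib]
  refine Finset.sum_congr rfl fun γ _ => ?_
  rw [wVm_flip, tB_flip, spinVal_not, spinVal_false]
  ring_nf

end Core5
section Core6

variable {G : SimpleGraph V} {β : ℝ} {W : Set V} {x u v : V} [Fintype G.edgeSet]

lemma mgc_alT_allTrue :
    mgc G x u v (alT G x u v) (fun _ => true) = fun _ => true := by
  funext z
  by_cases h : z ∈ sideU G x u v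
  · rw [mgc_mem h]; rfl
  · rw [mgc_not_mem h]

lemma ZB_pos {hv : v ∉ sideU G x u v} (hβ : 0 ≤ β) (b : Bool) : 0 < ZB (G := G) β W hv b := by
  unfold ZB
  refine Finset.sum_pos' (fun γ _ => mul_nonneg wVm_nonneg (Real.exp_pos _).le)
    ⟨(fun _ => true), Finset.mem_univ _, ?_⟩
  refine mul_pos ?_ (Real.exp_pos _)
  unfold wVm wVf
  rw [mgc_alT_allTrue]
  rw [IndP]
  rw [if_pos (fun w _ _ => rfl), one_mul]
  exact Real.exp_pos _

lemma SM_pos {hv : v ∉ sideU G x u v} (hβ : 0 ≤ β) : 0 < ∑ γ, nuM (G := G) β W hv γ := by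
  refine Finset.sum_pos' (fun γ _ => nuM_nonneg) ⟨(fun _ => false), Finset.mem_univ _, ?_⟩
  unfold nuM wVtm
  refine mul_pos (mul_pos ?_ (Real.exp_pos _)) (Real.exp_pos _)
  rw [IndM, if_pos, ]
  · norm_num
  · intro w _ hw
    rw [mgc_not_mem hw]

lemma YB_le_ZB {hv : v ∉ sideU G x u v} (b : Bool) :
    YB (G := G) β W hv b ≤ ZB (G := G) β W hv b := by
  unfold YB ZB
  refine Finset.sum_le_sum fun γ _ => ?_
  have h1 : 0 ≤ wVm G β W x u v γ * Real.exp (β * (spinVal b * spinVal (tB hv γ))) :=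
    mul_nonneg wVm_nonneg (Real.exp_pos _).le
  cases h : tB hv γ
  · rw [h] at h1
    rw [spinVal_false] at h1 ⊢
    linarith
  · rw [h] at h1
    rw [spinVal_true] at h1 ⊢
    linarith

lemma neg_ZB_le_YB {hv : v ∉ sideU G x u v} (b : Bool) :
    - ZB (G := G) β W hv b ≤ YB (G := G) β W hv b := by
  unfold YB ZB
  rw [← Finset.sum_neg_distrib]
  refine Finset.sum_le_sum fun γ _ => ?_
  have h1 : 0 ≤ wVm G β W x u v γ * Real.exp (β * (spinVal b * spinVal (tB hv γ))) :=
    mul_nonneg wVm_nonneg (Real.exp_pos _).le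
  cases h : tB hv γ
  · rw [h] at h1
    rw [spinVal_false] at h1 ⊢
    linarith
  · rw [h] at h1
    rw [spinVal_true] at h1 ⊢
    linarith

lemma tB_inf_sup {hv : v ∉ sideU G x u v} (a b : {z : V // z ∉ sideU G x u v} → Bool) :
    spinVal (tB hv (a ⊓ b)) + spinVal (tB hv (a ⊔ b))
      = spinVal (tB hv a) + spinVal (tB hv b) := by
  unfold tB
  rw [Pi.inf_apply, Pi.sup_apply]
  cases ha : a ⟨v, hv⟩ <;> cases hb : b ⟨v, hv⟩ <;>
    norm_num [bool_inf_eq, bool_sup_eq, spinVal]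

lemma nu_cross (hβ : 0 ≤ β) {hv : v ∉ sideU G x u v}
    (a b : {z : V // z ∉ sideU G x u v} → Bool) :
    nuM (G := G) β W hv a * nuP (G := G) β W hv b ≤
      nuM (G := G) β W hv (a ⊓ b) * nuP (G := G) β W hv (a ⊔ b) := by
  unfold nuM nuP wVtm wVm wVf
  have hM : mgc G x u v (alT G x u v) (a ⊓ b)
      = mgc G x u v (alT G x u v) a ⊓ mgc G x u v (alT G x u v) b := mgc_inf_fixL
  have hS : mgc G x u v (alT G x u v) (a ⊔ b)
      = mgc G x u v (alT G x u v) a ⊔ mgc G x u v (alT G x u v) b := mgc_sup_fixL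
  have e1 : ∀ (I₁ I₂ A₁ A₂ t₁ t₂ : ℝ),
      (I₁ * Real.exp (β * A₁) * Real.exp (β * t₁)) * (I₂ * Real.exp (β * A₂) * Real.exp (β * t₂))
        = (I₁ * I₂) * Real.exp (β * (A₁ + A₂ + t₁ + t₂)) := by
    intro I₁ I₂ A₁ A₂ t₁ t₂
    rw [show β * (A₁ + A₂ + t₁ + t₂) = β * A₁ + β * A₂ + β * t₁ + β * t₂ by ring,
      Real.exp_add, Real.exp_add, Real.exp_add]
    ring
  rw [e1, e1]
  refine mul_exp_le (mul_nonneg IndM_nonneg IndP_nonneg) ?_ ?_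
  · rw [hM, hS]; exact IndM_cross_supermod
  · refine mul_le_mul_of_nonneg_left ?_ hβ
    have h1 := HV_supermod (G := G) (x := x) (u := u) (v := v)
      (σ := mgc G x u v (alT G x u v) a) (τ := mgc G x u v (alT G x u v) b)
    rw [← hM, ← hS] at h1
    have h2 := tB_inf_sup (hv := hv) a b
    linarith

lemma holley_step (hβ : 0 ≤ β) {hv : v ∉ sideU G x u v} :
    (∑ γ, nuM (G := G) β W hv γ * chiB hv γ) * (∑ γ, nuP (G := G) β W hv γ)
      ≤ (∑ γ, nuP (G := G) β W hv γ * chiB hv γ) * (∑ γ, nuM (G := G) β W hv γ) := by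
  have key := holley (α := {z : V // z ∉ sideU G x u v} → Bool) (β := ℝ)
    (fun γ => nuM (G := G) β W hv γ * (∑ γ', nuP (G := G) β W hv γ'))
    (fun γ => nuP (G := G) β W hv γ * (∑ γ', nuM (G := G) β W hv γ'))
    (chiB hv)
    (fun γ => chiB_nonneg)
    (fun γ => mul_nonneg nuM_nonneg (Finset.sum_nonneg fun γ' _ => nuP_nonneg))
    (fun γ => mul_nonneg nuP_nonneg (Finset.sum_nonneg fun γ' _ => nuM_nonneg))
    (fun γ γ' hγ => by
      unfold chiB
      by_cases h : tB hv γ = true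
      · rw [if_pos h, if_pos (bool_true_le h (hγ ⟨v, hv⟩) : tB hv γ' = true)]
      · rw [if_neg h]
        positivity)
    (by rw [← Finset.sum_mul, ← Finset.sum_mul]; ring)
    (fun a b => by
      have h := nu_cross (W := W) hβ (hv := hv) a b
      calc nuM (G := G) β W hv a * (∑ γ', nuP (G := G) β W hv γ') *
            (nuP (G := G) β W hv b * (∑ γ', nuM (G := G) β W hv γ'))
          = (nuM (G := G) β W hv a * nuP (G := G) β W hv b) *
            ((∑ γ', nuP (G := G) β W hv γ') * (∑ γ', nuM (G := G) β W hv γ')) := by ring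
        _ ≤ (nuM (G := G) β W hv (a ⊓ b) * nuP (G := G) β W hv (a ⊔ b)) *
            ((∑ γ', nuP (G := G) β W hv γ') * (∑ γ', nuM (G := G) β W hv γ')) := by
            refine mul_le_mul_of_nonneg_right h ?_
            exact mul_nonneg (Finset.sum_nonneg fun γ' _ => nuP_nonneg)
              (Finset.sum_nonneg fun γ' _ => nuM_nonneg)
        _ = nuM (G := G) β W hv (a ⊓ b) * (∑ γ', nuP (G := G) β W hv γ') *
            (nuP (G := G) β W hv (a ⊔ b) * (∑ γ', nuM (G := G) β W hv γ')) := by ring)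
  -- key : ∑ γ, chiB γ * (nuM γ * SP) ≤ ∑ γ, chiB γ * (nuP γ * SM)
  calc (∑ γ, nuM (G := G) β W hv γ * chiB hv γ) * (∑ γ, nuP (G := G) β W hv γ)
      = ∑ γ, chiB hv γ * (nuM (G := G) β W hv γ * (∑ γ', nuP (G := G) β W hv γ')) := by
        rw [Finset.sum_mul]
        exact Finset.sum_congr rfl fun γ _ => by ring
    _ ≤ ∑ γ, chiB hv γ * (nuP (G := G) β W hv γ * (∑ γ', nuM (G := G) β W hv γ')) := key
    _ = (∑ γ, nuP (G := G) β W hv γ * chiB hv γ) * (∑ γ, nuM (G := G) β W hv γ) := by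
        rw [Finset.sum_mul]
        exact (Finset.sum_congr rfl fun γ _ => by ring).symm

lemma spin_eq_two_chi {hv : v ∉ sideU G x u v} (γ) :
    spinVal (tB hv γ) = 2 * chiB hv γ - 1 := by
  unfold chiB
  cases h : tB hv γ <;> simp [h, spinVal] <;> norm_num

lemma phiB_mono (hβ : 0 ≤ β) {hv : v ∉ sideU G x u v} :
    phiB (G := G) β W hv false ≤ phiB (G := G) β W hv true := by
  have hSP : 0 < ∑ γ, nuP (G := G) β W hv γ := by rw [← ZB_true]; exact ZB_pos hβ true
  have hSM : 0 < ∑ γ, nuM (G := G) β W hv γ := SM_pos hβ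
  have hYt : YB (G := G) β W hv true
      = 2 * (∑ γ, nuP (G := G) β W hv γ * chiB hv γ) - ∑ γ, nuP (G := G) β W hv γ := by
    rw [YB_true]
    rw [show (2 : ℝ) * (∑ γ, nuP (G := G) β W hv γ * chiB hv γ)
        - ∑ γ, nuP (G := G) β W hv γ
      = ∑ γ, (2 * (nuP (G := G) β W hv γ * chiB hv γ) - nuP (G := G) β W hv γ) by
        rw [Finset.sum_sub_distrib, ← Finset.mul_sum]]
    exact Finset.sum_congr rfl fun γ _ => by rw [spin_eq_two_chi]; ring
  have hYf : YB (G := G) β W hv false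
      = -(2 * (∑ γ, nuM (G := G) β W hv γ * chiB hv γ) - ∑ γ, nuM (G := G) β W hv γ) := by
    rw [YB_false]
    rw [show (2 : ℝ) * (∑ γ, nuM (G := G) β W hv γ * chiB hv γ)
        - ∑ γ, nuM (G := G) β W hv γ
      = ∑ γ, (2 * (nuM (G := G) β W hv γ * chiB hv γ) - nuM (G := G) β W hv γ) by
        rw [Finset.sum_sub_distrib, ← Finset.mul_sum]]
    rw [neg_inj]
    exact Finset.sum_congr rfl fun γ _ => by rw [spin_eq_two_chi]; ring
  unfold phiB
  rw [ZB_true, ZB_false, hYt, hYf, spinVal_true, spinVal_false]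
  rw [div_le_div_iff₀ hSM hSP]
  have hh := holley_step (W := W) hβ (hv := hv)
  nlinarith [hh]

end Core6
section Core7

variable {G : SimpleGraph V} {β : ℝ} {W : Set V} {x u v : V} [Fintype G.edgeSet]

/-- all-plus configuration on the other side. -/
def gaT (G : SimpleGraph V) (x u v : V) : {z : V // z ∉ sideU G x u v} → Bool := fun _ => true

/-- `U`-side weight as a function of the half-configuration. -/
def wUm (G : SimpleGraph V) [Fintype G.edgeSet] (β : ℝ) (W : Set V) (x u v : V)
    (α : {z : V // z ∈ sideU G x u v} → Bool) : ℝ :=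
  wUf G β W x u v (mgc G x u v α (gaT G x u v))

/-- The spin at `u` of a half-configuration. -/
def sB (hu : u ∈ sideU G x u v) (α : {z : V // z ∈ sideU G x u v} → Bool) : Bool :=
  α ⟨u, hu⟩

/-- The effective single-site measure on the `U`-side. -/
def rhoF (β : ℝ) (W : Set V) (hu : u ∈ sideU G x u v) (hv : v ∉ sideU G x u v)
    (α : {z : V // z ∈ sideU G x u v} → Bool) : ℝ :=
  wUm G β W x u v α * ZB β W hv (sB hu α)

/-- Indicator of `aP` as a function of the half-configuration. -/
def fAi (G : SimpleGraph V) (W : Set V) (x u v : V)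
    (α : {z : V // z ∈ sideU G x u v} → Bool) : ℝ :=
  if aP G W x u v (mgc G x u v α (gaT G x u v)) then 1 else 0

lemma wUm_nonneg {α} : 0 ≤ wUm G β W x u v α := wUf_nonneg
lemma fAi_nonneg {α} : 0 ≤ fAi G W x u v α := by unfold fAi; positivity
lemma rhoF_nonneg {hu : u ∈ sideU G x u v} {hv : v ∉ sideU G x u v} (hβ : 0 ≤ β) {α} :
    0 ≤ rhoF (G := G) β W hu hv α :=
  mul_nonneg wUm_nonneg (ZB_pos hβ _).le

lemma wUf_local {α γ} :
    wUf G β W x u v (mgc G x u v α γ) = wUm G β W x u v α := by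
  unfold wUm wUf
  rw [IndP_congr (τ := mgc G x u v α (gaT G x u v))
      (fun z hz => by rw [mgc_mem hz, mgc_mem hz]),
    HU_congr (τ := mgc G x u v α (gaT G x u v))
      (fun z hz => by rw [mgc_mem hz, mgc_mem hz])]

lemma wVf_local {α γ} :
    wVf G β W x u v (mgc G x u v α γ) = wVm G β W x u v γ := by
  unfold wVm wVf
  rw [IndP_congr (τ := mgc G x u v (alT G x u v) γ)
      (fun z hz => by rw [mgc_not_mem hz, mgc_not_mem hz]),
    HV_congr (τ := mgc G x u v (alT G x u v) γ)
      (fun z hz => by rw [mgc_not_mem hz, mgc_not_mem hz])]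

lemma aP_local {α γ} :
    aP G W x u v (mgc G x u v α γ) ↔ aP G W x u v (mgc G x u v α (gaT G x u v)) :=
  ⟨aP_congr (fun z hz => by rw [mgc_mem hz, mgc_mem hz]),
   aP_congr (fun z hz => by rw [mgc_mem hz, mgc_mem hz])⟩

lemma edgeCorr_mgc {hu : u ∈ sideU G x u v} {hv : v ∉ sideU G x u v} {α γ} :
    edgeCorr (mgc G x u v α γ) s(u,v) = spinVal (sB hu α) * spinVal (tB hv γ) := by
  rw [edgeCorr_mk, mgc_mem hu, mgc_not_mem hv]
  rfl

lemma sum_split (huv : G.Adj u v) (hu : u ∈ sideU G x u v) (hv : v ∉ sideU G x u v)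
    (Φ : (V → Bool) → ℝ) (Φa : ({z : V // z ∈ sideU G x u v} → Bool) → ℝ)
    (Φg : ({z : V // z ∉ sideU G x u v} → Bool) → ℝ)
    (hΦ : ∀ α γ, Φ (mgc G x u v α γ) = Φa α * Φg γ) :
    ∑ σ : V → Bool, isingPlusWeight G β W σ * Φ σ
      = ∑ α, wUm G β W x u v α * Φa α *
          ∑ γ, wVm G β W x u v γ *
            Real.exp (β * (spinVal (sB hu α) * spinVal (tB hv γ))) * Φg γ := by
  rw [sum_mgc (fun σ => isingPlusWeight G β W σ * Φ σ)]
  refine Finset.sum_congr rfl fun α _ => ?_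
  rw [Finset.mul_sum]
  refine Finset.sum_congr rfl fun γ _ => ?_
  rw [weight_factor huv hu hv, hΦ, wUf_local, wVf_local,
    edgeCorr_mgc (hu := hu) (hv := hv)]
  ring

lemma S_one (huv : G.Adj u v) (hu : u ∈ sideU G x u v) (hv : v ∉ sideU G x u v) :
    ∑ σ : V → Bool, isingPlusWeight G β W σ = ∑ α, rhoF (G := G) β W hu hv α := by
  have h := sum_split (β := β) (W := W) huv hu hv (fun _ => 1) (fun _ => 1) (fun _ => 1)
    (fun _ _ => by ring)
  simp only [mul_one] at h
  rw [h]
  rfl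

lemma S_A (huv : G.Adj u v) (hu : u ∈ sideU G x u v) (hv : v ∉ sideU G x u v) :
    ∑ σ : V → Bool, isingPlusWeight G β W σ * (if aP G W x u v σ then 1 else 0)
      = ∑ α, rhoF (G := G) β W hu hv α * fAi G W x u v α := by
  have h := sum_split (β := β) (W := W) huv hu hv (fun σ => if aP G W x u v σ then 1 else 0)
    (fAi G W x u v) (fun _ => 1)
    (fun α γ => by rw [mul_one]; unfold fAi; exact if_congr aP_local rfl rfl)
  rw [h]
  refine Finset.sum_congr rfl fun α _ => ?_
  simp only [mul_one]
  unfold rhoF ZB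
  ring

lemma S_eps (hβ : 0 ≤ β) (huv : G.Adj u v) (hu : u ∈ sideU G x u v)
    (hv : v ∉ sideU G x u v) :
    ∑ σ : V → Bool, isingPlusWeight G β W σ * edgeCorr σ s(u,v)
      = ∑ α, rhoF (G := G) β W hu hv α * phiB β W hv (sB hu α) := by
  have h := sum_split (β := β) (W := W) huv hu hv (fun σ => edgeCorr σ s(u,v))
    (fun α => spinVal (sB hu α)) (fun γ => spinVal (tB hv γ))
    (fun α γ => edgeCorr_mgc (hu := hu) (hv := hv))
  rw [h]
  refine Finset.sum_congr rfl fun α _ => ?_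
  have hZ : ZB (G := G) β W hv (sB hu α) ≠ 0 := (ZB_pos hβ _).ne'
  unfold rhoF phiB
  rw [show (∑ γ, wVm G β W x u v γ *
      Real.exp (β * (spinVal (sB hu α) * spinVal (tB hv γ))) * spinVal (tB hv γ))
    = YB (G := G) β W hv (sB hu α) from rfl]
  field_simp

lemma S_Aeps (hβ : 0 ≤ β) (huv : G.Adj u v) (hu : u ∈ sideU G x u v)
    (hv : v ∉ sideU G x u v) :
    ∑ σ : V → Bool, isingPlusWeight G β W σ *
        ((if aP G W x u v σ then 1 else 0) * edgeCorr σ s(u,v))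
      = ∑ α, rhoF (G := G) β W hu hv α *
          (fAi G W x u v α * phiB β W hv (sB hu α)) := by
  have h := sum_split (β := β) (W := W) huv hu hv
    (fun σ => (if aP G W x u v σ then 1 else 0) * edgeCorr σ s(u,v))
    (fun α => fAi G W x u v α * spinVal (sB hu α)) (fun γ => spinVal (tB hv γ))
    (fun α γ => by
      rw [edgeCorr_mgc (hu := hu) (hv := hv)]
      unfold fAi
      rw [if_congr (aP_local (α := α) (γ := γ)) rfl rfl]
      ring)
  rw [h]
  refine Finset.sum_congr rfl fun α _ => ?_
  have hZ : ZB (G := G) β W hv (sB hu α) ≠ 0 := (ZB_pos hβ _).ne'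
  unfold rhoF phiB
  rw [show (∑ γ, wVm G β W x u v γ *
      Real.exp (β * (spinVal (sB hu α) * spinVal (tB hv γ))) * spinVal (tB hv γ))
    = YB (G := G) β W hv (sB hu α) from rfl]
  field_simp

lemma phiB_ge_neg_one (hβ : 0 ≤ β) {hv : v ∉ sideU G x u v} (b : Bool) :
    -1 ≤ phiB (G := G) β W hv b := by
  have hZ := ZB_pos (W := W) (hv := hv) hβ b
  unfold phiB
  rw [le_div_iff₀ hZ]
  cases b
  · rw [spinVal_false]
    have := YB_le_ZB (β := β) (W := W) (hv := hv) false
    linarith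
  · rw [spinVal_true]
    have := neg_ZB_le_YB (β := β) (W := W) (hv := hv) true
    linarith

lemma F_pair_eq (F : Bool → ℝ) (b c : Bool) : F (b ⊓ c) * F (b ⊔ c) = F b * F c := by
  cases b <;> cases c <;> simp [bool_inf_eq, bool_sup_eq] <;> ring

lemma rhoF_supermod (hβ : 0 ≤ β) {hu : u ∈ sideU G x u v} {hv : v ∉ sideU G x u v}
    (α α' : {z : V // z ∈ sideU G x u v} → Bool) :
    rhoF (G := G) β W hu hv α * rhoF (G := G) β W hu hv α'
      ≤ rhoF (G := G) β W hu hv (α ⊓ α') * rhoF (G := G) β W hu hv (α ⊔ α') := by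
  unfold rhoF
  have hw : wUm G β W x u v α * wUm G β W x u v α'
      ≤ wUm G β W x u v (α ⊓ α') * wUm G β W x u v (α ⊔ α') := by
    unfold wUm
    rw [mgc_inf_fixR, mgc_sup_fixR]
    exact wUf_supermod hβ
  have hZ : ZB (G := G) β W hv (sB hu (α ⊓ α')) * ZB (G := G) β W hv (sB hu (α ⊔ α'))
      = ZB (G := G) β W hv (sB hu α) * ZB (G := G) β W hv (sB hu α') := by
    have h1 : sB hu (α ⊓ α') = sB hu α ⊓ sB hu α' := rfl
    have h2 : sB hu (α ⊔ α') = sB hu α ⊔ sB hu α' := rfl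
    rw [h1, h2]
    exact F_pair_eq (fun b => ZB (G := G) β W hv b) (sB hu α) (sB hu α')
  calc wUm G β W x u v α * ZB (G := G) β W hv (sB hu α) *
        (wUm G β W x u v α' * ZB (G := G) β W hv (sB hu α'))
      = (wUm G β W x u v α * wUm G β W x u v α') *
        (ZB (G := G) β W hv (sB hu α) * ZB (G := G) β W hv (sB hu α')) := by ring
    _ ≤ (wUm G β W x u v (α ⊓ α') * wUm G β W x u v (α ⊔ α')) *
        (ZB (G := G) β W hv (sB hu α) * ZB (G := G) β W hv (sB hu α')) := by
        refine mul_le_mul_of_nonneg_right hw ?_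
        exact mul_nonneg (ZB_pos hβ _).le (ZB_pos hβ _).le
    _ = wUm G β W x u v (α ⊓ α') * ZB (G := G) β W hv (sB hu (α ⊓ α')) *
        (wUm G β W x u v (α ⊔ α') * ZB (G := G) β W hv (sB hu (α ⊔ α'))) := by
        rw [← hZ]; ring

lemma fAi_mono {α α'} (h : α ≤ α') : fAi G W x u v α ≤ fAi G W x u v α' := by
  unfold fAi
  by_cases ha : aP G W x u v (mgc G x u v α (gaT G x u v))
  · rw [if_pos ha, if_pos (aP_mono (mgc_mono_left h) ha)]
  · rw [if_neg ha]
    positivity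

lemma part1 (hβ : 0 ≤ β) (huv : G.Adj u v) (hu : u ∈ sideU G x u v)
    (hv : v ∉ sideU G x u v) :
    (∑ σ : V → Bool, isingPlusWeight G β W σ * (if aP G W x u v σ then 1 else 0))
      * (∑ σ : V → Bool, isingPlusWeight G β W σ * edgeCorr σ s(u,v))
    ≤ (∑ σ : V → Bool, isingPlusWeight G β W σ *
          ((if aP G W x u v σ then 1 else 0) * edgeCorr σ s(u,v)))
      * (∑ σ : V → Bool, isingPlusWeight G β W σ) := by
  rw [S_one huv hu hv, S_A huv hu hv, S_eps hβ huv hu hv, S_Aeps hβ huv hu hv]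
  have key := fkg (α := {z : V // z ∈ sideU G x u v} → Bool) (β := ℝ)
    (fAi G W x u v) (fun α => phiB β W hv (sB hu α) + 1) (rhoF (G := G) β W hu hv)
    (fun α => rhoF_nonneg hβ)
    (fun α => fAi_nonneg)
    (fun α => by have := phiB_ge_neg_one (W := W) hβ (hv := hv) (sB hu α); simp only [Pi.zero_apply]; linarith)
    (fun α α' h => fAi_mono h)
    (fun α α' h => by
      dsimp only
      have hs : sB hu α ≤ sB hu α' := h ⟨u, hu⟩
      have hmono : phiB (G := G) β W hv (sB hu α) ≤ phiB (G := G) β W hv (sB hu α') := by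
        cases h1 : sB hu α
        · cases h2 : sB hu α'
          · exact le_refl _
          · exact phiB_mono hβ
        · cases h2 : sB hu α'
          · rw [h1, h2] at hs
            exact absurd hs (by decide)
          · exact le_refl _
      linarith)
    (fun α α' => rhoF_supermod hβ α α')
  have e1 : ∑ α, rhoF (G := G) β W hu hv α * (phiB β W hv (sB hu α) + 1)
      = (∑ α, rhoF (G := G) β W hu hv α * phiB β W hv (sB hu α))
        + ∑ α, rhoF (G := G) β W hu hv α := by
    rw [← Finset.sum_add_distrib]
    exact Finset.sum_congr rfl fun α _ => by ring
  have e2 : ∑ α, rhoF (G := G) β W hu hv α *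
        (fAi G W x u v α * (phiB β W hv (sB hu α) + 1))
      = (∑ α, rhoF (G := G) β W hu hv α * (fAi G W x u v α * phiB β W hv (sB hu α)))
        + ∑ α, rhoF (G := G) β W hu hv α * fAi G W x u v α := by
    rw [← Finset.sum_add_distrib]
    exact Finset.sum_congr rfl fun α _ => by ring
  rw [e1, e2] at key
  nlinarith [key]

end Core7
section Outer

variable {G : SimpleGraph V} {β : ℝ} {W : Set V} {x u v : V} [Fintype G.edgeSet]

lemma weight_nonneg {σ : V → Bool} : 0 ≤ isingPlusWeight G β W σ := by
  unfold isingPlusWeight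
  positivity

lemma core_cov (hβ : 0 ≤ β) (huv : G.Adj u v) (hu : u ∈ sideU G x u v)
    (hv : v ∉ sideU G x u v) :
    (∑ σ : V → Bool, isingPlusWeight G β W σ * (if PlusConn G σ x W then 1 else 0))
      * (∑ σ : V → Bool, isingPlusWeight G β W σ * edgeCorr σ s(u,v))
    ≤ (∑ σ : V → Bool, isingPlusWeight G β W σ *
          ((if PlusConn G σ x W then 1 else 0) * edgeCorr σ s(u,v)))
      * (∑ σ : V → Bool, isingPlusWeight G β W σ) := by
  have hdecA : ∑ σ : V → Bool, isingPlusWeight G β W σ * (if PlusConn G σ x W then 1 else 0)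
      = (∑ σ : V → Bool, isingPlusWeight G β W σ * (if aP G W x u v σ then 1 else 0))
        + ∑ σ : V → Bool, isingPlusWeight G β W σ *
            ((if bP G W x u v σ then 1 else 0) * (if cP G W x u v σ then 1 else 0)) := by
    rw [← Finset.sum_add_distrib]
    refine Finset.sum_congr rfl fun σ _ => ?_
    rw [indicator_decomp huv hu hv σ]
    ring
  have hdecAe : ∑ σ : V → Bool, isingPlusWeight G β W σ *
        ((if PlusConn G σ x W then 1 else 0) * edgeCorr σ s(u,v))
      = (∑ σ : V → Bool, isingPlusWeight G β W σ *
          ((if aP G W x u v σ then 1 else 0) * edgeCorr σ s(u,v)))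
        + ∑ σ : V → Bool, isingPlusWeight G β W σ *
            ((if bP G W x u v σ then 1 else 0) * (if cP G W x u v σ then 1 else 0)) := by
    rw [← Finset.sum_add_distrib]
    refine Finset.sum_congr rfl fun σ _ => ?_
    rw [indicator_decomp huv hu hv σ]
    by_cases hb : bP G W x u v σ
    · by_cases hc : cP G W x u v σ
      · rw [bc_spin hb hc, if_pos hb, if_pos hc]
        ring
      · rw [if_neg hc]
        ring
    · rw [if_neg hb]
      ring
  have hSbc : 0 ≤ ∑ σ : V → Bool, isingPlusWeight G β W σ *
      ((if bP G W x u v σ then 1 else 0) * (if cP G W x u v σ then 1 else 0)) := by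
    refine Finset.sum_nonneg fun σ _ => ?_
    have := weight_nonneg (G := G) (β := β) (W := W) (σ := σ)
    positivity
  have hSe : (∑ σ : V → Bool, isingPlusWeight G β W σ * edgeCorr σ s(u,v))
      ≤ ∑ σ : V → Bool, isingPlusWeight G β W σ := by
    refine Finset.sum_le_sum fun σ _ => ?_
    exact mul_le_of_le_one_right weight_nonneg (edgeCorr_le_one σ _)
  have hp1 := part1 (W := W) hβ huv hu hv
  have h2 : (∑ σ : V → Bool, isingPlusWeight G β W σ *
        ((if bP G W x u v σ then 1 else 0) * (if cP G W x u v σ then 1 else 0)))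
        * (∑ σ : V → Bool, isingPlusWeight G β W σ * edgeCorr σ s(u,v))
      ≤ (∑ σ : V → Bool, isingPlusWeight G β W σ *
          ((if bP G W x u v σ then 1 else 0) * (if cP G W x u v σ then 1 else 0)))
        * (∑ σ : V → Bool, isingPlusWeight G β W σ) :=
    mul_le_mul_of_nonneg_left hSe hSbc
  rw [hdecA, hdecAe]
  nlinarith [hp1, h2]

lemma per_edge (hT : G.IsTree) (hβ : 0 ≤ β) :
    ∀ e ∈ G.edgeSet,
    (∑ σ : V → Bool, isingPlusWeight G β W σ * (if PlusConn G σ x W then 1 else 0))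
      * (∑ σ : V → Bool, isingPlusWeight G β W σ * edgeCorr σ e)
    ≤ (∑ σ : V → Bool, isingPlusWeight G β W σ *
          ((if PlusConn G σ x W then 1 else 0) * edgeCorr σ e))
      * (∑ σ : V → Bool, isingPlusWeight G β W σ) := by
  intro e
  induction e using Sym2.ind with
  | _ p q =>
    intro he
    have hadj : G.Adj p q := G.mem_edgeSet.1 he
    have hbr : ¬ (G.deleteEdges {s(p,q)}).Reachable p q := by
      have h := (SimpleGraph.isAcyclic_iff_forall_edge_isBridge.1 hT.IsAcyclic) he
      exact SimpleGraph.isBridge_iff.1 h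
    have hreach : G.Reachable x p := hT.isConnected.preconnected x p
    have hside : (G.deleteEdges {s(p,q)}).Reachable x p ∨
        (G.deleteEdges {s(p,q)}).Reachable x q := by
      rcases reach_split G p q hreach with h1 | ⟨h1, h2⟩ | ⟨h1, h2⟩
      · exact Or.inl h1
      · exact Or.inl h1
      · exact Or.inr h1
    rcases hside with h1 | h1
    · have hu : p ∈ sideU G x p q := h1
      have hv : q ∉ sideU G x p q := fun hq => hbr (h1.symm.trans hq)
      exact core_cov hβ hadj hu hv
    · have hsw : s(q, p) = s(p, q) := Sym2.eq_swap
      have hu : q ∈ sideU G x q p := by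
        show (G.deleteEdges {s(q,p)}).Reachable x q
        rw [hsw]
        exact h1
      have hv : p ∉ sideU G x q p := by
        intro hp
        have hp' : (G.deleteEdges {s(q,p)}).Reachable x p := hp
        rw [hsw] at hp'
        exact hbr (hp'.symm.trans h1)
      have hcc := core_cov (W := W) (u := q) (v := p) hβ hadj.symm hu hv
      rw [hsw] at hcc
      exact hcc

lemma cov_nonneg (hT : G.IsTree) (hβ : 0 ≤ β) :
    (∑ σ : V → Bool, isingPlusWeight G β W σ * (if PlusConn G σ x W then 1 else 0))
      * (∑ σ : V → Bool, isingPlusWeight G β W σ *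
          (∑ f : G.edgeSet, edgeCorr σ f.val))
    ≤ (∑ σ : V → Bool, isingPlusWeight G β W σ *
          ((if PlusConn G σ x W then 1 else 0) * (∑ f : G.edgeSet, edgeCorr σ f.val)))
      * (∑ σ : V → Bool, isingPlusWeight G β W σ) := by
  have hL : ∑ σ : V → Bool, isingPlusWeight G β W σ *
        ((if PlusConn G σ x W then 1 else 0) * (∑ f : G.edgeSet, edgeCorr σ f.val))
      = ∑ f : G.edgeSet, ∑ σ : V → Bool, isingPlusWeight G β W σ *
          ((if PlusConn G σ x W then 1 else 0) * edgeCorr σ f.val) := by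
    rw [Finset.sum_comm]
    refine Finset.sum_congr rfl fun σ _ => ?_
    rw [Finset.mul_sum, Finset.mul_sum]
  have hR : ∑ σ : V → Bool, isingPlusWeight G β W σ *
        (∑ f : G.edgeSet, edgeCorr σ f.val)
      = ∑ f : G.edgeSet, ∑ σ : V → Bool, isingPlusWeight G β W σ * edgeCorr σ f.val := by
    rw [Finset.sum_comm]
    refine Finset.sum_congr rfl fun σ _ => ?_
    rw [Finset.mul_sum]
  rw [hL, hR, Finset.mul_sum, Finset.sum_mul]
  refine Finset.sum_le_sum fun f _ => ?_
  exact per_edge hT hβ f.val f.property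

end Outer
section Final

variable {G : SimpleGraph V} {W : Set V} {x : V} [Fintype G.edgeSet]

lemma weight_pos_total (b : ℝ) :
    0 < ∑ σ : V → Bool, isingPlusWeight G b W σ := by
  refine Finset.sum_pos' (fun σ _ => weight_nonneg) ⟨(fun _ => true), Finset.mem_univ _, ?_⟩
  unfold isingPlusWeight
  rw [if_pos (fun w _ => rfl), one_mul]
  exact Real.exp_pos _

lemma hasDerivAt_N (s : Finset (V → Bool)) (b : ℝ) :
    HasDerivAt (fun b => ∑ σ ∈ s, isingPlusWeight G b W σ)
      (∑ σ ∈ s, isingPlusWeight G b W σ * (∑ f : G.edgeSet, edgeCorr σ f.val)) b := by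
  refine HasDerivAt.fun_sum fun σ _ => ?_
  have h2 : HasDerivAt (fun b : ℝ => b * (∑ f : G.edgeSet, edgeCorr σ f.val))
      (∑ f : G.edgeSet, edgeCorr σ f.val) b :=
    hasDerivAt_mul_const _
  have h4 := (h2.exp).const_mul (if ∀ w ∈ W, σ w = true then (1:ℝ) else 0)
  have he : isingPlusWeight G b W σ * (∑ f : G.edgeSet, edgeCorr σ f.val)
      = (if ∀ w ∈ W, σ w = true then (1:ℝ) else 0) *
        (Real.exp (b * (∑ f : G.edgeSet, edgeCorr σ f.val)) *
          (∑ f : G.edgeSet, edgeCorr σ f.val)) := by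
    unfold isingPlusWeight
    ring
  rw [he]
  exact h4

lemma filter_sum_eq (b : ℝ) (g : (V → Bool) → ℝ) :
    ∑ σ ∈ univ.filter (fun σ : V → Bool => PlusConn G σ x W),
        isingPlusWeight G b W σ * g σ
      = ∑ σ : V → Bool, isingPlusWeight G b W σ *
          ((if PlusConn G σ x W then 1 else 0) * g σ) := by
  rw [Finset.sum_filter]
  refine Finset.sum_congr rfl fun σ _ => ?_
  by_cases h : PlusConn G σ x W
  · rw [if_pos h, if_pos h]; ring
  · rw [if_neg h, if_neg h]; ring

lemma filter_sum_eq' (b : ℝ) :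
    ∑ σ ∈ univ.filter (fun σ : V → Bool => PlusConn G σ x W),
        isingPlusWeight G b W σ
      = ∑ σ : V → Bool, isingPlusWeight G b W σ *
          (if PlusConn G σ x W then 1 else 0) := by
  rw [Finset.sum_filter]
  refine Finset.sum_congr rfl fun σ _ => ?_
  by_cases h : PlusConn G σ x W
  · rw [if_pos h, if_pos h]; ring
  · rw [if_neg h, if_neg h]; ring

end Final

/-- On a finite tree, the probability of plus-percolation from
`x` to the boundary `W` under the plus-boundary Ising measure is nondecreasing
in the inverse temperature `β`. -/
theorem ising_tree_plus_percolation_monotone (G : SimpleGraph V) [Fintype G.edgeSet]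
    (hT : G.IsTree) (W : Set V) (hW : W.Nonempty) (x : V)
    (β₁ β₂ : ℝ) (h0 : 0 ≤ β₁) (h12 : β₁ ≤ β₂) :
    ∑ σ ∈ univ.filter (fun σ : V → Bool => PlusConn G σ x W),
        isingPlusMeasure G β₁ W σ ≤
      ∑ σ ∈ univ.filter (fun σ : V → Bool => PlusConn G σ x W),
        isingPlusMeasure G β₂ W σ := by
  classical
  have hrw : ∀ b : ℝ, ∑ σ ∈ univ.filter (fun σ : V → Bool => PlusConn G σ x W),
      isingPlusMeasure G b W σ
    = (∑ σ ∈ univ.filter (fun σ : V → Bool => PlusConn G σ x W),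
        isingPlusWeight G b W σ) / (∑ σ' : V → Bool, isingPlusWeight G b W σ') := by
    intro b
    unfold isingPlusMeasure
    rw [← Finset.sum_div]
  rw [hrw β₁, hrw β₂]
  set F : ℝ → ℝ := fun b =>
    (∑ σ ∈ univ.filter (fun σ : V → Bool => PlusConn G σ x W),
      isingPlusWeight G b W σ) / (∑ σ' : V → Bool, isingPlusWeight G b W σ') with hF
  have hder : ∀ b : ℝ, HasDerivAt F
      (((∑ σ ∈ univ.filter (fun σ : V → Bool => PlusConn G σ x W),
          isingPlusWeight G b W σ * (∑ f : G.edgeSet, edgeCorr σ f.val))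
        * (∑ σ' : V → Bool, isingPlusWeight G b W σ')
        - (∑ σ ∈ univ.filter (fun σ : V → Bool => PlusConn G σ x W),
            isingPlusWeight G b W σ)
          * (∑ σ' : V → Bool, isingPlusWeight G b W σ'
              * (∑ f : G.edgeSet, edgeCorr σ' f.val)))
        / (∑ σ' : V → Bool, isingPlusWeight G b W σ') ^ 2) b := by
    intro b
    exact (hasDerivAt_N _ b).div (hasDerivAt_N univ b) (weight_pos_total b).ne'
  have hmono : MonotoneOn F (Set.Icc β₁ β₂) := by
    refine monotoneOn_of_deriv_nonneg (convex_Icc β₁ β₂)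
      (fun b _ => (hder b).differentiableAt.continuousAt.continuousWithinAt)
      (fun b _ => (hder b).differentiableAt.differentiableWithinAt)
      (fun b hb => ?_)
    rw [interior_Icc] at hb
    have hb0 : 0 ≤ b := h0.trans hb.1.le
    rw [(hder b).deriv]
    apply div_nonneg _ (sq_nonneg _)
    have key := cov_nonneg (G := G) (W := W) (x := x) hT hb0
    rw [filter_sum_eq b (fun σ => ∑ f : G.edgeSet, edgeCorr σ f.val), filter_sum_eq' b]
    linarith [key]
  exact hmono (Set.mem_Icc.2 ⟨le_refl β₁, h12⟩) (Set.mem_Icc.2 ⟨h12, le_refl β₂⟩) h12
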